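/- Let n be a positive integer and let N, N' be real numbers with N' ≤ N. Let A and Ã be invertible n×n matrices over ℚ_p with all entries of p-adic norm at most 1, such that ‖A_{ij} - Ã_{ij}‖_p ≤ p^{-N} for all i, j, and set d = v_p(det A). Let b, b̃ ∈ ℚ_p^n satisfy ‖b_i - b̃_i‖_p ≤ p^{-N'} for all i, and suppose the computed solution x̃ = Ã⁻¹b̃ satisfies ‖x̃_i‖_p ≤ 1 for all i. Then every entry of A⁻¹b - x̃ has p-adic norm at most p^{d - N'}; i.e., the computed solution is correct to precision N' - v_p(det A). -/

import Mathlib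

/-- Final precision proposition for Coleman integration: if the integral matrix `A`
(playing the role of `Φ - I`) is accurate to precision `N`, the right-hand side is
accurate to precision `N' ≤ N`, and the computed solution `x' = A'⁻¹b'` is integral,
then `x'` agrees with the true solution `A⁻¹b` to precision `N' - v_p(det A)`. -/
theorem coleman_linear_system_precision {p : ℕ} [Fact p.Prime] (n : ℕ) (hn : 0 < n)
    (N N' : ℝ) (hNN' : N' ≤ N)
    (A A' : Matrix (Fin n) (Fin n) ℚ_[p])
    (hAinv : IsUnit A) (hA'inv : IsUnit A')
    (hA : ∀ i j, ‖A i j‖ ≤ 1) (hA' : ∀ i j, ‖A' i j‖ ≤ 1)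
    (hAA' : ∀ i j, ‖A i j - A' i j‖ ≤ (p : ℝ) ^ (-N))
    (d : ℤ) (hd : d = (A.det).valuation)
    (b b' : Fin n → ℚ_[p])
    (hb : ∀ i, ‖b i - b' i‖ ≤ (p : ℝ) ^ (-N'))
    (hx' : ∀ i, ‖A'⁻¹.mulVec b' i‖ ≤ 1) :
    ∀ i, ‖(A⁻¹.mulVec b - A'⁻¹.mulVec b') i‖ ≤ (p : ℝ) ^ ((d : ℝ) - N') := by
  have hp1 : (1 : ℝ) ≤ (p : ℝ) := by
    exact_mod_cast (Fact.out : p.Prime).one_lt.le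
  have hp0 : (0 : ℝ) < (p : ℝ) := lt_of_lt_of_le one_pos hp1
  set x' : Fin n → ℚ_[p] := A'⁻¹.mulVec b' with hx'def
  have hdet : IsUnit A.det := (Matrix.isUnit_iff_isUnit_det A).mp hAinv
  have hdet' : IsUnit A'.det := (Matrix.isUnit_iff_isUnit_det A').mp hA'inv
  have hdetne : A.det ≠ 0 := hdet.ne_zero
  -- A' * x' = b'
  have hA'x' : A'.mulVec x' = b' := by
    rw [hx'def, Matrix.mulVec_mulVec, Matrix.mul_nonsing_inv _ hdet', Matrix.one_mulVec]
  -- residual vector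
  set v : Fin n → ℚ_[p] := b - A.mulVec x' with hvdef
  -- the error equals A⁻¹ v
  have key : A⁻¹.mulVec b - x' = A⁻¹.mulVec v := by
    rw [hvdef, Matrix.mulVec_sub, Matrix.mulVec_mulVec, Matrix.nonsing_inv_mul _ hdet,
      Matrix.one_mulVec]
  -- entrywise bound on v
  have hv : ∀ i, ‖v i‖ ≤ (p : ℝ) ^ (-N') := by
    intro i
    have hv2 : v i = (b i - b' i) + ((A' - A).mulVec x') i := by
      simp only [hvdef, Matrix.sub_mulVec, hA'x', Pi.sub_apply]
      ring
    rw [hv2]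
    refine (IsUltrametricDist.norm_add_le_max _ _).trans (max_le (hb i) ?_)
    have : ‖((A' - A).mulVec x') i‖ ≤ (p : ℝ) ^ (-N) := by
      rw [Matrix.mulVec, dotProduct]
      refine IsUltrametricDist.norm_sum_le_of_forall_le_of_nonneg
        (Real.rpow_nonneg hp0.le _) (fun j _ => ?_)
      rw [norm_mul]
      calc ‖(A' - A) i j‖ * ‖x' j‖ ≤ (p : ℝ) ^ (-N) * 1 := by
            refine mul_le_mul ?_ (hx' j) (norm_nonneg _) (Real.rpow_nonneg hp0.le _)
            simpa [Matrix.sub_apply, norm_sub_rev] using hAA' i j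
        _ = (p : ℝ) ^ (-N) := mul_one _
    exact this.trans (Real.rpow_le_rpow_of_exponent_le hp1 (by linarith))
  -- entrywise bound on A⁻¹
  have hdetnorm : ‖A.det‖ = (p : ℝ) ^ (-d : ℤ) := by
    rw [Padic.norm_eq_zpow_neg_valuation hdetne, hd]
  have hadj : ∀ i j, ‖A.adjugate i j‖ ≤ 1 := by
    intro i j
    set B : Matrix (Fin n) (Fin n) ℤ_[p] := fun i j => ⟨A i j, hA i j⟩ with hBdef
    have hmap : B.map (PadicInt.Coe.ringHom : ℤ_[p] →+* ℚ_[p]) = A := by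
      ext i j; rfl
    have : A.adjugate = B.adjugate.map (PadicInt.Coe.ringHom : ℤ_[p] →+* ℚ_[p]) := by
      have h2 := (PadicInt.Coe.ringHom (p := p)).map_adjugate B
      simp only [RingHom.mapMatrix_apply] at h2
      rw [hmap] at h2
      exact h2.symm
    rw [this]
    exact (B.adjugate i j).norm_le_one
  have hAinvEntry : ∀ i j, ‖A⁻¹ i j‖ ≤ (p : ℝ) ^ (d : ℤ) := by
    intro i j
    rw [Matrix.inv_def, Ring.inverse_eq_inv]
    simp only [Matrix.smul_apply, smul_eq_mul, norm_mul, norm_inv, hdetnorm]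
    calc ((p : ℝ) ^ (-d : ℤ))⁻¹ * ‖A.adjugate i j‖
        ≤ ((p : ℝ) ^ (-d : ℤ))⁻¹ * 1 := by
          refine mul_le_mul_of_nonneg_left (hadj i j) ?_
          positivity
      _ = (p : ℝ) ^ (d : ℤ) := by rw [mul_one, ← zpow_neg, neg_neg]
  -- conclude
  intro i
  rw [show A⁻¹.mulVec b - A'⁻¹.mulVec b' = A⁻¹.mulVec v from key]
  rw [Matrix.mulVec, dotProduct]
  refine IsUltrametricDist.norm_sum_le_of_forall_le_of_nonneg
    (Real.rpow_nonneg hp0.le _) (fun j _ => ?_)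
  rw [norm_mul]
  calc ‖A⁻¹ i j‖ * ‖v j‖ ≤ (p : ℝ) ^ (d : ℤ) * (p : ℝ) ^ (-N') := by
        exact mul_le_mul (hAinvEntry i j) (hv j) (norm_nonneg _) (by positivity)
    _ = (p : ℝ) ^ ((d : ℝ) - N') := by
        rw [← Real.rpow_intCast (p : ℝ) d, ← Real.rpow_add hp0, sub_eq_add_neg]
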